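/- Let G be a simple ASHG on n players. Form G' by adding n(k−1) new players, each of whom values every original player at 1 (and all other values involving new players being 0, with original players valuing new players at 0). Then G has a k-coalition partition with egalitarian value at least δ if and only if G' has a k-coalition partition into equally sized coalitions (each of size n) with egalitarian value at least δ, provided δ ≥ 1. -/

import Mathlib

lemma fiber_exists (k N : ℕ) (f : Fin k → ℕ) (h : ∑ c, f c = N) :
    ∃ g : Fin N → Fin k, ∀ c, (Finset.univ.filter (fun x => g x = c)).card = f c := by
  have hcard : Fintype.card (Σ c : Fin k, Fin (f c)) = Fintype.card (Fin N) := by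
    simp [Fintype.card_sigma, h]
  obtain ⟨e⟩ := Fintype.card_eq.mp hcard
  refine ⟨fun x => (e.symm x).1, fun c => ?_⟩
  rw [Finset.card_filter]
  rw [Fintype.sum_equiv e.symm (fun x => if (e.symm x).1 = c then (1:ℕ) else 0)
      (fun p => if p.1 = c then (1:ℕ) else 0) (fun x => rfl)]
  rw [← Finset.univ_sigma_univ, Finset.sum_sigma]
  simp [apply_ite Finset.card, Finset.sum_ite_eq]

lemma card_filter_sum {α β : Type*} [Fintype α] [Fintype β] (p : α ⊕ β → Prop)
    [DecidablePred p] :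
    (Finset.univ.filter p).card
      = (Finset.univ.filter (fun a => p (Sum.inl a))).card
        + (Finset.univ.filter (fun b => p (Sum.inr b))).card := by
  simp only [Finset.card_filter]
  exact Fintype.sum_sum_type _

theorem stmt_5 (n k δ : ℕ) (hn : 0 < n) (hk : 1 ≤ k) (hδ : 1 ≤ δ)
    (v : Fin n → Fin n → ℕ) (hv : ∀ i j : Fin n, v i j = 0 ∨ v i j = 1) :
    (∃ P : Fin n → Fin k, Function.Surjective P ∧
      ∀ i : Fin n,
        δ ≤ ∑ j ∈ Finset.univ.filter (fun j => P j = P i ∧ j ≠ i), v i j)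
    ↔
    (∃ Q : (Fin n ⊕ Fin (n * (k - 1))) → Fin k,
      (∀ c : Fin k, (Finset.univ.filter (fun x => Q x = c)).card = n) ∧
      ∀ x : Fin n ⊕ Fin (n * (k - 1)),
        δ ≤ ∑ y ∈ Finset.univ.filter (fun y => Q y = Q x ∧ y ≠ x),
          (fun a b =>
            match a, b with
            | Sum.inl i, Sum.inl j => v i j
            | Sum.inr _, Sum.inl _ => 1
            | _, _ => 0) x y) := by
  constructor
  · rintro ⟨P, hPsurj, hPut⟩
    set m : Fin k → ℕ := fun c => (Finset.univ.filter (fun j => P j = c)).card with hm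
    have hmle : ∀ c, m c ≤ n := fun c => by
      simpa using (Finset.card_filter_le Finset.univ (fun j => P j = c))
    have hmsum : ∑ c, m c = n := by
      have := Finset.card_eq_sum_card_fiberwise (s := (Finset.univ : Finset (Fin n)))
        (t := (Finset.univ : Finset (Fin k))) (f := P) (fun x _ => Finset.mem_univ _)
      simpa [hm] using this.symm
    have hmge : ∀ c, δ + 1 ≤ m c := by
      intro c
      obtain ⟨i, rfl⟩ := hPsurj c
      have h1 := hPut i
      have h2 : ∑ j ∈ Finset.univ.filter (fun j => P j = P i ∧ j ≠ i), v i j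
          ≤ (Finset.univ.filter (fun j => P j = P i ∧ j ≠ i)).card := by
        have := Finset.sum_le_card_nsmul (Finset.univ.filter (fun j => P j = P i ∧ j ≠ i))
          (fun j => v i j) 1 (fun j _ => by rcases hv i j with h | h <;> simp [h])
        rw [smul_eq_mul, mul_one] at this
        exact this
      have h3 : (Finset.univ.filter (fun j => P j = P i ∧ j ≠ i)).card = m (P i) - 1 := by
        rw [← Finset.filter_filter, Finset.filter_ne', Finset.card_erase_of_mem (by simp)]
      have h4 : 1 ≤ m (P i) :=
        Finset.card_pos.mpr ⟨i, by simp⟩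
      omega
    have hsum2 : ∑ c, (n - m c) = n * (k - 1) := by
      have h1 : ∑ c : Fin k, ((n - m c) + m c) = ∑ c : Fin k, n :=
        Finset.sum_congr rfl (fun c _ => by have := hmle c; omega)
      rw [Finset.sum_add_distrib, hmsum, Finset.sum_const, Finset.card_univ,
        Fintype.card_fin, smul_eq_mul] at h1
      obtain ⟨k', rfl⟩ : ∃ k', k = k' + 1 := ⟨k - 1, by omega⟩
      simp only [Nat.add_sub_cancel]
      rw [Nat.succ_mul] at h1
      rw [mul_comm]
      omega
    obtain ⟨g, hg⟩ := fiber_exists k (n * (k - 1)) (fun c => n - m c) hsum2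
    refine ⟨Sum.elim P g, ?_, ?_⟩
    · intro c
      rw [card_filter_sum]
      simp only [Sum.elim_inl, Sum.elim_inr]
      erw [hg c]
      have h5 : (Finset.univ.filter (fun a => P a = c)).card = m c := rfl
      erw [h5]
      have := hmle c
      omega
    · rintro (i | b)
      · have h := hPut i
        rw [Finset.sum_filter, Fintype.sum_sum_type]
        simp only [Sum.elim_inl, Sum.elim_inr, ne_eq, Sum.inl.injEq, reduceCtorEq,
          not_false_eq_true, and_true, ite_self, Finset.sum_const_zero, add_zero]
        rw [← Finset.sum_filter]
        exact h
      · rw [Finset.sum_filter, Fintype.sum_sum_type]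
        simp only [Sum.elim_inl, Sum.elim_inr, ne_eq, reduceCtorEq, not_false_eq_true,
          and_true, ite_self, Finset.sum_const_zero, add_zero]
        have h6 : (Finset.univ.filter (fun x => P x = g b)).card
            = ∑ x : Fin n, if P x = g b then 1 else 0 := Finset.card_filter _ _
        have h7 : m (g b) = (Finset.univ.filter (fun x => P x = g b)).card := rfl
        have h8 := hmge (g b)
        omega
  · rintro ⟨Q, hQcard, hQut⟩
    refine ⟨fun i => Q (Sum.inl i), ?_, ?_⟩
    · intro c
      have hne : (Finset.univ.filter (fun x => Q x = c)).Nonempty := by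
        rw [← Finset.card_pos, hQcard c]; exact hn
      obtain ⟨x, hx⟩ := hne
      rw [Finset.mem_filter] at hx
      match x, hx with
      | Sum.inl i, hx => exact ⟨i, hx.2⟩
      | Sum.inr b, hx =>
        have h1 := hQut (Sum.inr b)
        have h2 : ∑ y ∈ Finset.univ.filter (fun y => Q y = Q (Sum.inr b) ∧ y ≠ Sum.inr b),
            (fun a b => match a, b with
              | Sum.inl i, Sum.inl j => v i j
              | Sum.inr _, Sum.inl _ => 1
              | _, _ => 0) (Sum.inr b) y ≠ 0 := by omega
        obtain ⟨y, hy, hw⟩ := Finset.exists_ne_zero_of_sum_ne_zero h2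
        rw [Finset.mem_filter] at hy
        match y, hy, hw with
        | Sum.inl j, hy, _ => exact ⟨j, hy.2.1.trans hx.2⟩
        | Sum.inr b', _, hw => exact absurd rfl hw
    · intro i
      have h := hQut (Sum.inl i)
      rw [Finset.sum_filter, Fintype.sum_sum_type] at h
      simp only [ne_eq, Sum.inl.injEq, reduceCtorEq, not_false_eq_true, and_true,
        ite_self, Finset.sum_const_zero, add_zero] at h
      rw [Finset.sum_filter]
      exact h
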